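/- Baer's classification in complexity terms: isomorphism of nonzero subgroups of ℚ (torsion-free abelian groups of rank 1) is Borel bireducible with E₀. Precisely, let G₁ = {χ : ℚ → Bool | {q : ℚ | χ q = true} is an additive subgroup of ℚ different from {0}}, a Borel subset of the Polish space ℚ → Bool, and let ≅₁ be the relation on G₁: χ ≅₁ χ' iff the coded subgroups are isomorphic as additive groups. Then there exist a Borel measurable f : G₁ → (ℕ → Bool) with χ ≅₁ χ' ↔ f χ E₀ f χ' for all χ, χ' ∈ G₁, and a Borel measurable g : (ℕ → Bool) → G₁ with u E₀ v ↔ g u ≅₁ g v for all u, v. -/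

import Mathlib

/-- The equivalence relation `E₀` on Cantor space: eventual equality. -/
def E0 (f g : ℕ → Bool) : Prop := ∃ N : ℕ, ∀ n : ℕ, N ≤ n → f n = g n

/-- `χ : ℚ → Bool` codes the additive subgroup `H` of `ℚ`. -/
def CodesSubgroup (χ : ℚ → Bool) (H : AddSubgroup ℚ) : Prop :=
  ∀ q : ℚ, χ q = true ↔ q ∈ H

/-- The codes of nonzero additive subgroups of `ℚ` (torsion-free abelian groups of
rank 1), a Borel subset of the Polish space `ℚ → Bool`. -/
def G1 : Set (ℚ → Bool) := {χ | ∃ H : AddSubgroup ℚ, CodesSubgroup χ H ∧ H ≠ ⊥}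

/-- Isomorphism of the coded subgroups of `ℚ` as additive groups. -/
def Iso1 (χ χ' : ℚ → Bool) : Prop :=
  ∃ H H' : AddSubgroup ℚ, CodesSubgroup χ H ∧ CodesSubgroup χ' H' ∧ Nonempty (H ≃+ H')

namespace BaerAux

noncomputable def pr (i : ℕ) : ℕ := Nat.nth Nat.Prime i

lemma pr_prime (i : ℕ) : (pr i).Prime := Nat.nth_mem_of_infinite Nat.infinite_setOf_prime i

lemma pr_inj : Function.Injective pr := Nat.nth_injective Nat.infinite_setOf_prime

noncomputable def pidx (p : ℕ) : ℕ := Nat.count Nat.Prime p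

lemma pr_pidx {p : ℕ} (hp : p.Prime) : pr (pidx p) = p := Nat.nth_count hp

lemma pidx_pr (i : ℕ) : pidx (pr i) = i := Nat.count_nth_of_infinite Nat.infinite_setOf_prime i

abbrev vp (p : ℕ) (q : ℚ) : ℤ := padicValRat p q


lemma not_dvd_num {p : ℕ} (hp : p.Prime) {q : ℚ} (h : p ∣ q.den) :
    padicValInt p q.num = 0 := by
  apply padicValInt.eq_zero_of_not_dvd
  intro hd
  have h1 : p ∣ q.num.natAbs := Int.natCast_dvd_natCast.mp (Int.dvd_natAbs.mpr hd)
  exact hp.one_lt.ne' (Nat.eq_one_of_dvd_one ((Nat.dvd_gcd h1 h).trans q.reduced.dvd))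

lemma vp_dvd_den {p : ℕ} (hp : p.Prime) {q : ℚ} (h : p ∣ q.den) :
    vp p q = -(padicValNat p q.den : ℤ) := by
  rw [vp, padicValRat_def, not_dvd_num hp h]; simp

lemma vp_not_dvd_den {p : ℕ} (hp : p.Prime) {q : ℚ} (h : ¬ p ∣ q.den) :
    0 ≤ vp p q := by
  rw [vp, padicValRat_def, padicValNat.eq_zero_of_not_dvd h]; simp

lemma vp_neg_iff_dvd_den {p : ℕ} (hp : p.Prime) {q : ℚ} :
    vp p q < 0 ↔ p ∣ q.den := by
  constructor
  · intro hv
    by_contra h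
    exact absurd (vp_not_dvd_den hp h) (by omega)
  · intro h
    rw [vp_dvd_den hp h]
    haveI := Fact.mk hp
    have h1 : 1 ≤ padicValNat p q.den := one_le_padicValNat_of_dvd q.den_nz h
    omega

lemma exists_int_of_vp_nonneg {q : ℚ} (h : ∀ p : ℕ, p.Prime → 0 ≤ vp p q) :
    ∃ z : ℤ, q = (z : ℚ) := by
  have hd : q.den = 1 := by
    rw [Nat.eq_one_iff_not_exists_prime_dvd]
    intro p hp hdvd
    exact absurd (h p hp) (not_le.mpr ((vp_neg_iff_dvd_den hp).mpr hdvd))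
  exact ⟨q.num, ((Rat.den_eq_one_iff q).mp hd).symm⟩

lemma vp_prime_pow {p q : ℕ} (hp : p.Prime) (hq : q.Prime) (k : ℕ) :
    vp p ((q : ℚ) ^ k) = if p = q then (k : ℤ) else 0 := by
  haveI := Fact.mk hp
  have hq0 : (q:ℚ) ≠ 0 := by exact_mod_cast hq.ne_zero
  rw [vp, padicValRat.pow (q := (q:ℚ))]
  have : padicValRat p (q:ℚ) = padicValNat p q := by
    simp [padicValRat.of_nat]
  rw [this]
  by_cases hpq : p = q
  · subst hpq; simp [padicValNat.self hp.one_lt]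
  · haveI := Fact.mk hq
    rw [padicValNat_primes hpq]; simp [hpq]

lemma vp_support_finite {c : ℚ} (hc : c ≠ 0) :
    {p : ℕ | p.Prime ∧ vp p c ≠ 0}.Finite := by
  apply Set.Finite.subset (Set.finite_Iic (c.num.natAbs * c.den))
  rintro p ⟨hp, hv⟩
  have h1 : p ∣ c.num.natAbs * c.den := by
    rcases Nat.lt_or_ge 0 (padicValNat p c.den) with h | h
    · exact Dvd.dvd.mul_left (dvd_of_one_le_padicValNat h) _
    · have hden : padicValNat p c.den = 0 := by omega
      have hnum : padicValInt p c.num ≠ 0 := by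
        rw [vp, padicValRat_def, hden] at hv; omega
      have : p ∣ c.num.natAbs := by
        by_contra hnd
        exact hnum (padicValNat.eq_zero_of_not_dvd hnd)
      exact Dvd.dvd.mul_right this _
  refine Nat.le_of_dvd ?_ h1
  have h2 : c.num ≠ 0 := Rat.num_ne_zero.mpr hc
  positivity

lemma vp_prod_pow {p : ℕ} (hp : p.Prime) {S : Finset ℕ} {f g : ℕ → ℕ}
    (hf : ∀ i ∈ S, (f i).Prime) :
    vp p (∏ i ∈ S, ((f i : ℚ)) ^ (g i)) = ∑ i ∈ S, (if p = f i then (g i : ℤ) else 0) := by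
  classical
  induction S using Finset.induction with
  | empty => simp [vp, padicValRat.one]
  | @insert a S' hni ih =>
    have hfa := hf a (Finset.mem_insert_self a S')
    have hf' : ∀ i ∈ S', (f i).Prime := fun i hi => hf i (Finset.mem_insert_of_mem hi)
    have h1 : ((f a : ℚ)) ^ (g a) ≠ 0 :=
      pow_ne_zero _ (Nat.cast_ne_zero.mpr hfa.ne_zero)
    have h2 : (∏ i ∈ S', ((f i : ℚ)) ^ (g i)) ≠ 0 := by
      apply Finset.prod_ne_zero_iff.mpr
      intro i hi
      exact pow_ne_zero _ (Nat.cast_ne_zero.mpr (hf' i hi).ne_zero)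
    rw [Finset.prod_insert hni, Finset.sum_insert hni, vp,
      padicValRat.mul (hp := Fact.mk hp) h1 h2, ← vp, ← vp, vp_prime_pow hp hfa, ih hf']

lemma vp_mul {p : ℕ} (hp : p.Prime) {a b : ℚ} (ha : a ≠ 0) (hb : b ≠ 0) :
    vp p (a * b) = vp p a + vp p b := by
  haveI := Fact.mk hp; exact padicValRat.mul ha hb
lemma vp_div {p : ℕ} (hp : p.Prime) {a b : ℚ} (ha : a ≠ 0) (hb : b ≠ 0) :
    vp p (a / b) = vp p a - vp p b := by
  haveI := Fact.mk hp; exact padicValRat.div ha hb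

section Subgroup

variable {H H' : AddSubgroup ℚ}

lemma zsmul_mem' (z : ℤ) {x : ℚ} (hx : x ∈ H) : (z : ℚ) * x ∈ H := by
  simpa [zsmul_eq_mul] using zsmul_mem hx z

lemma div_mul_mem {x : ℚ} {m n : ℕ} (hmn : Nat.Coprime m n)
    (hm : x / (m : ℚ) ∈ H) (hn : x / (n : ℚ) ∈ H) : x / ((m : ℚ) * n) ∈ H := by
  rcases Nat.eq_zero_or_pos m with hm0 | hmpos
  · subst hm0; simpa using hm
  rcases Nat.eq_zero_or_pos n with hn0 | hnpos
  · subst hn0; simpa using hn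
  obtain ⟨a, b, hab⟩ := (Nat.isCoprime_iff_coprime.mpr hmn)
  have key : x / ((m : ℚ) * n) = (a : ℚ) * (x / n) + (b : ℚ) * (x / m) := by
    have hm' : (m : ℚ) ≠ 0 := by positivity
    have hn' : (n : ℚ) ≠ 0 := by positivity
    have habq : (a : ℚ) * m + (b : ℚ) * n = 1 := by exact_mod_cast hab
    calc x / ((m : ℚ) * n) = ((a : ℚ) * m + (b : ℚ) * n) * (x / ((m : ℚ) * n)) := by
          rw [habq, one_mul]
      _ = (a : ℚ) * (x / n) + (b : ℚ) * (x / m) := by field_simp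
  rw [key]
  exact add_mem (zsmul_mem' a hn) (zsmul_mem' b hm)

lemma div_prod_mem {x : ℚ} (hx : x ∈ H) {S : Finset ℕ} {f g : ℕ → ℕ}
    (hf : ∀ i ∈ S, (f i).Prime) (hinj : Set.InjOn f S)
    (h : ∀ i ∈ S, x / ((f i : ℚ)) ^ (g i) ∈ H) :
    x / (∏ i ∈ S, ((f i : ℚ)) ^ (g i)) ∈ H := by
  classical
  induction S using Finset.induction with
  | empty => simpa using hx
  | @insert a S' hni ih =>
    have hfa := hf a (Finset.mem_insert_self a S')
    have hf' : ∀ i ∈ S', (f i).Prime := fun i hi => hf i (Finset.mem_insert_of_mem hi)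
    have h' : ∀ i ∈ S', x / ((f i : ℚ)) ^ (g i) ∈ H :=
      fun i hi => h i (Finset.mem_insert_of_mem hi)
    have hinj' : Set.InjOn f S' := hinj.mono (by simp [Finset.coe_insert, Set.subset_insert])
    have hprod : (∏ i ∈ S', ((f i : ℚ)) ^ (g i)) = ((∏ i ∈ S', (f i) ^ (g i) : ℕ) : ℚ) := by
      push_cast; rfl
    have hcop : Nat.Coprime ((f a) ^ (g a)) (∏ i ∈ S', (f i) ^ (g i)) := by
      apply Nat.Coprime.prod_right
      intro i hi
      apply Nat.Coprime.pow
      have hne : f a ≠ f i := by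
        intro he
        exact hni (by
          have : a = i := hinj (by simp) (by simp [hi]) he
          rwa [this])
      exact (Nat.coprime_primes hfa (hf' i hi)).mpr hne
    have := div_mul_mem hcop (by push_cast; exact h a (Finset.mem_insert_self a S'))
      (by rw [← hprod]; exact ih hf' hinj' h')
    rw [Finset.prod_insert hni, hprod]
    push_cast at this ⊢
    exact this

lemma gap_mem {x q : ℚ} (hx : x ∈ H) (hq : q ∈ H) (hx0 : x ≠ 0) (hq0 : q ≠ 0)
    {p : ℕ} (hp : p.Prime) (hlt : vp p q < vp p x) :
    x / (p : ℚ) ^ ((vp p x - vp p q).toNat) ∈ H := by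
  haveI := Fact.mk hp
  set r : ℚ := q / x with hr
  have hr0 : r ≠ 0 := div_ne_zero hq0 hx0
  set m : ℤ := r.num with hm
  set n : ℕ := r.den with hn
  have hm0 : m ≠ 0 := Rat.num_ne_zero.mpr hr0
  have hn0 : (n : ℚ) ≠ 0 := Nat.cast_ne_zero.mpr r.den_nz
  have hnq : (n : ℚ) * q = (m : ℚ) * x := by
    have h1 : (m : ℚ) / n = r := Rat.num_div_den r
    rw [hr] at h1
    field_simp at h1
    linarith [h1]
  -- valuation bookkeeping
  have hvr : vp p r = vp p q - vp p x := vp_div hp hq0 hx0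
  have hrneg : vp p r < 0 := by omega
  have hpdvd : p ∣ n := by
    have := vp_not_dvd_den hp (q := r)
    by_contra hc
    exact absurd (this hc) (by omega)
  have hval : vp p r = -(padicValNat p n : ℤ) := vp_dvd_den hp hpdvd
  set k : ℕ := (vp p x - vp p q).toNat with hk
  have hkv : padicValNat p n = k := by omega
  have hdvd : p ^ k ∣ n := by rw [← hkv]; exact pow_padicValNat_dvd
  obtain ⟨n', hn'⟩ := hdvd
  have hn'0 : n' ≠ 0 := by rintro rfl; exact r.den_nz (by simpa [hn] using hn')
  have hpn' : ¬ p ∣ n' := by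
    intro hd
    have : p ^ (k+1) ∣ n := by
      obtain ⟨w, hw⟩ := hd
      exact ⟨w, by rw [hn', hw]; ring⟩
    have := padicValNat_dvd_iff_le (p := p) (n := k+1) (a := n) r.den_nz |>.mp this
    omega
  have hpm : ¬ (p : ℤ) ∣ m := by
    intro hd
    have h1 : p ∣ m.natAbs := Int.natCast_dvd_natCast.mp (Int.dvd_natAbs.mpr hd)
    exact hp.one_lt.ne' (Nat.eq_one_of_dvd_one ((Nat.dvd_gcd h1 hpdvd).trans r.reduced.dvd))
  -- Bezout
  have hP : Prime (p : ℤ) := Nat.prime_iff_prime_int.mp hp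
  have hcop : IsCoprime (m * (n' : ℤ)) ((p : ℤ) ^ k) := by
    apply IsCoprime.pow_right
    apply IsCoprime.symm
    rw [hP.coprime_iff_not_dvd]
    intro hd
    rcases hP.dvd_mul.mp hd with hd1 | hd2
    · exact hpm hd1
    · exact hpn' (Int.natCast_dvd_natCast.mp hd2)
  obtain ⟨A, B, hAB⟩ := hcop
  have hkey : x / (p : ℚ) ^ k = ((A * n' ^ 2 : ℤ) : ℚ) * q + ((B : ℤ) : ℚ) * x := by
    have hpk : ((p : ℚ)) ^ k ≠ 0 := pow_ne_zero _ (Nat.cast_ne_zero.mpr hp.ne_zero)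
    have hnn : (n : ℚ) = (p : ℚ) ^ k * n' := by exact_mod_cast congrArg (Nat.cast : ℕ → ℚ) hn'
    have hABq : (A : ℚ) * (m * n') + B * (p : ℚ) ^ k = 1 := by exact_mod_cast hAB
    rw [div_eq_iff hpk]
    push_cast
    linear_combination (-x) * hABq + (-(A:ℚ)*(n':ℚ)) * hnq + ((A:ℚ)*(n':ℚ)*q) * hnn
  rw [hkey]
  exact add_mem (zsmul_mem' _ hq) (zsmul_mem' _ hx)

lemma mem_of_gaps {x q : ℚ} (hx : x ∈ H) (hx0 : x ≠ 0) (hq0 : q ≠ 0)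
    (h : ∀ p : ℕ, p.Prime → vp p q < vp p x →
      x / (p : ℚ) ^ ((vp p x - vp p q).toNat) ∈ H) :
    q ∈ H := by
  set r : ℚ := q / x with hr
  have hr0 : r ≠ 0 := div_ne_zero hq0 hx0
  have hden : x / (r.den : ℚ) ∈ H := by
    have hprod : ∏ p ∈ r.den.primeFactors, ((p : ℚ)) ^ (padicValNat p r.den) = (r.den : ℚ) := by
      rw [show ∏ p ∈ r.den.primeFactors, ((p : ℚ)) ^ (padicValNat p r.den)
          = ((∏ p ∈ r.den.primeFactors, p ^ (padicValNat p r.den) : ℕ) : ℚ) by push_cast; rfl]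
      congr 1
      have h1 : ∀ p ∈ r.den.primeFactors, p ^ (padicValNat p r.den) = p ^ (r.den.factorization p) := by
        intro p hp
        rw [Nat.factorization_def _ (Nat.prime_of_mem_primeFactors hp)]
      rw [Finset.prod_congr rfl h1]
      have h2 := Nat.factorization_prod_pow_eq_self r.den_nz
      rwa [Finsupp.prod, Nat.support_factorization] at h2
    rw [← hprod]
    apply div_prod_mem hx (fun p hp => Nat.prime_of_mem_primeFactors hp)
      (Function.Injective.injOn (fun a b hab => hab))
    intro p hps
    have hp := Nat.prime_of_mem_primeFactors hps
    have hpd : p ∣ r.den := Nat.dvd_of_mem_primeFactors hps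
    have hval : vp p r = -(padicValNat p r.den : ℤ) := vp_dvd_den hp hpd
    have hvr : vp p r = vp p q - vp p x := vp_div hp hq0 hx0
    haveI := Fact.mk hp
    have h1 : 1 ≤ padicValNat p r.den := one_le_padicValNat_of_dvd r.den_nz hpd
    have hlt : vp p q < vp p x := by omega
    have : (vp p x - vp p q).toNat = padicValNat p r.den := by omega
    rw [← this]
    exact h p hp hlt
  have hkey : q = ((r.num : ℤ) : ℚ) * (x / (r.den : ℚ)) := by
    have h1 : (r.num : ℚ) / (r.den : ℚ) = r := Rat.num_div_den r
    have hd0 : (r.den : ℚ) ≠ 0 := Nat.cast_ne_zero.mpr r.den_nz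
    field_simp
    rw [hr] at h1
    rw [div_eq_div_iff hd0 (by exact hx0)] at h1
    linarith [h1]
  rw [hkey]
  exact zsmul_mem' _ hden

def Col (H : AddSubgroup ℚ) (x : ℚ) (p k : ℕ) : Prop := x / (p : ℚ) ^ k ∈ H

lemma Col.anti {x : ℚ} {p : ℕ} (hp : p.Prime) {j k : ℕ} (hjk : j ≤ k)
    (h : Col H x p k) : Col H x p j := by
  have hp0 : (p : ℚ) ≠ 0 := Nat.cast_ne_zero.mpr hp.ne_zero
  have hkey : x / (p : ℚ) ^ j = (((p : ℤ) ^ (k - j) : ℤ) : ℚ) * (x / (p : ℚ) ^ k) := by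
    push_cast
    have hpow : (p:ℚ)^(k-j) * (p:ℚ)^j = (p:ℚ)^k := by
      rw [← pow_add]; congr 1; omega
    field_simp
    linear_combination (-x) * hpow
  rw [Col, hkey]
  exact zsmul_mem' _ h

lemma col_transfer {x y : ℚ} (hx : x ∈ H) (hy : y ∈ H) (hx0 : x ≠ 0) (hy0 : y ≠ 0)
    {p : ℕ} (hp : p.Prime) {k j : ℕ} (hj : (j : ℤ) ≤ (k : ℤ) + (vp p y - vp p x))
    (hk : Col H x p k) : Col H y p j := by
  have hp0 : (p : ℚ) ≠ 0 := Nat.cast_ne_zero.mpr hp.ne_zero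
  have hq0 : y / (p : ℚ) ^ j ≠ 0 := div_ne_zero hy0 (pow_ne_zero _ hp0)
  apply mem_of_gaps hx hx0 hq0
  intro l hl hlt
  have hvps : vp l ((p:ℚ) ^ j) = if l = p then (j:ℤ) else 0 := vp_prime_pow hl hp j
  have hvq : vp l (y / (p:ℚ)^j) = vp l y - (if l = p then (j:ℤ) else 0) := by
    rw [vp_div hl hy0 (pow_ne_zero _ hp0), hvps]
  by_cases hlp : l = p
  · subst hlp
    rw [hvq] at hlt ⊢
    simp only [if_pos rfl] at hlt ⊢
    have hgap : (vp l x - (vp l y - j)).toNat ≤ k := by omega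
    exact Col.anti hl hgap hk
  · rw [hvq] at hlt ⊢
    simp only [if_neg hlp] at hlt ⊢
    have hlt' : vp l y < vp l x := by omega
    have := gap_mem hx hy hx0 hy0 hl hlt'
    rw [show vp l x - (vp l y - 0) = vp l x - vp l y by ring]
    exact this

lemma col_eq_of_vp_eq {x y : ℚ} (hx : x ∈ H) (hy : y ∈ H) (hx0 : x ≠ 0) (hy0 : y ≠ 0)
    {p : ℕ} (hp : p.Prime) (hd : vp p y = vp p x) (k : ℕ) :
    Col H x p k ↔ Col H y p k :=
  ⟨fun h => col_transfer hx hy hx0 hy0 hp (by omega) h,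
   fun h => col_transfer hy hx hy0 hx0 hp (by omega) h⟩

lemma col_diff_finite {x y : ℚ} (hx : x ∈ H) (hy : y ∈ H) (hx0 : x ≠ 0) (hy0 : y ≠ 0)
    {p : ℕ} (hp : p.Prime) :
    {k : ℕ | ¬ (Col H x p k ↔ Col H y p k)}.Finite := by
  classical
  set d : ℤ := vp p y - vp p x with hd
  by_cases hall : ∀ k, Col H x p k
  · apply Set.Finite.subset (Set.finite_Iio 0)
    intro k hk
    exfalso
    apply hk
    have h1 : Col H y p k := col_transfer hx hy hx0 hy0 hp
      (k := k + (-d).toNat) (by omega) (hall _)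
    simp [hall k, h1]
  · push_neg at hall
    obtain ⟨k₀, hk₀⟩ := hall
    apply Set.Finite.subset (Set.finite_Iio (k₀ + d.natAbs + 1))
    intro k hk
    by_contra hbig
    simp only [Set.mem_Iio, not_lt] at hbig
    apply hk
    have h1 : ¬ Col H x p k := fun h => hk₀ (Col.anti hp (by omega) h)
    have h2 : ¬ Col H y p k := by
      intro h
      apply hk₀
      apply col_transfer hy hx hy0 hx0 hp (k := k) (j := k₀) ?_ h
      omega
    simp [h1, h2]

lemma scale_mem_of_cols_le {x x' : ℚ} (hx : x ∈ H) (hx' : x' ∈ H')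
    (hx0 : x ≠ 0) (hx0' : x' ≠ 0)
    (hcol : ∀ p : ℕ, p.Prime → ∀ k : ℕ, Col H x p k → Col H' x' p k)
    {q : ℚ} (hq : q ∈ H) : (x' / x) * q ∈ H' := by
  by_cases hq0 : q = 0
  · simp only [hq0, mul_zero]; exact zero_mem H'
  have hc0 : x' / x ≠ 0 := div_ne_zero hx0' hx0
  have hcq0 : (x' / x) * q ≠ 0 := mul_ne_zero hc0 hq0
  apply mem_of_gaps hx' hx0' hcq0
  intro p hp hlt
  have hv : vp p ((x' / x) * q) = vp p x' - vp p x + vp p q := by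
    rw [vp_mul hp hc0 hq0, vp_div hp hx0' hx0]
  have hlt' : vp p q < vp p x := by omega
  have hgap : (vp p x' - vp p ((x'/x) * q)).toNat = (vp p x - vp p q).toNat := by omega
  rw [hgap]
  exact hcol p hp _ (gap_mem hx hq hx0 hq0 hp hlt')

lemma scale_iff_of_cols_eq {x x' : ℚ} (hx : x ∈ H) (hx' : x' ∈ H')
    (hx0 : x ≠ 0) (hx0' : x' ≠ 0)
    (hcol : ∀ p : ℕ, p.Prime → ∀ k : ℕ, (Col H x p k ↔ Col H' x' p k))
    (q : ℚ) : q ∈ H ↔ (x' / x) * q ∈ H' := by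
  constructor
  · exact fun hq => scale_mem_of_cols_le hx hx' hx0 hx0'
      (fun p hp k h => (hcol p hp k).mp h) hq
  · intro hq
    have := scale_mem_of_cols_le hx' hx hx0' hx0
      (fun p hp k h => (hcol p hp k).mpr h) hq
    rwa [show (x / x') * ((x' / x) * q) = q by field_simp] at this

lemma exists_scale_of_iso (hH : H ≠ ⊥) (e : H ≃+ H') :
    ∃ c : ℚ, c ≠ 0 ∧ ∀ q : ℚ, q ∈ H ↔ c * q ∈ H' := by
  obtain ⟨⟨x, hx⟩, hx0'⟩ := AddSubgroup.ne_bot_iff_exists_ne_zero.mp hH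
  have hx0 : x ≠ 0 := fun h => hx0' (Subtype.ext h)
  set c : ℚ := ((e ⟨x, hx⟩ : H') : ℚ) / x with hc
  have hex0 : ((e ⟨x, hx⟩ : H') : ℚ) ≠ 0 := by
    intro h
    have h2 : e ⟨x, hx⟩ = e 0 := by rw [map_zero]; exact Subtype.ext h
    exact hx0' (e.injective h2)
  have hc0 : c ≠ 0 := div_ne_zero hex0 hx0
  have key : ∀ y (hy : y ∈ H), ((e ⟨y, hy⟩ : H') : ℚ) = c * y := by
    intro y hy
    by_cases hy0 : y = 0
    · subst hy0
      have : (⟨(0:ℚ), hy⟩ : H) = 0 := rfl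
      rw [this, map_zero]
      simp
    set m : ℤ := (y / x).num with hm
    set n : ℕ := (y / x).den with hn
    have hyx0 : y / x ≠ 0 := div_ne_zero hy0 hx0
    have hm0 : m ≠ 0 := Rat.num_ne_zero.mpr hyx0
    have hn0 : (n : ℚ) ≠ 0 := Nat.cast_ne_zero.mpr (y/x).den_nz
    have hnm : (n : ℚ) * y = (m : ℚ) * x := by
      have h1 : (m : ℚ) / n = y / x := Rat.num_div_den (y/x)
      rw [div_eq_div_iff hn0 hx0] at h1
      linarith [h1]
    have hsm : ((n : ℤ) • (⟨y, hy⟩ : H)) = (m • (⟨x, hx⟩ : H)) := by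
      apply Subtype.ext
      push_cast
      simpa using hnm
    have := congrArg e hsm
    rw [map_zsmul, map_zsmul] at this
    have hcoe : (n : ℚ) * ((e ⟨y, hy⟩ : H') : ℚ) = (m : ℚ) * ((e ⟨x, hx⟩ : H') : ℚ) := by
      have := congrArg (fun z : H' => (z : ℚ)) this
      push_cast at this
      simpa using this
    have heY : ((e ⟨y, hy⟩ : H') : ℚ) = (m : ℚ) * ((e ⟨x, hx⟩ : H') : ℚ) / n := by
      rw [eq_div_iff hn0]; linarith [hcoe]
    rw [heY, hc]
    field_simp
    linear_combination (-1 : ℚ) * hnm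
  refine ⟨c, hc0, fun q => ⟨fun hq => ?_, fun hq => ?_⟩⟩
  · rw [← key q hq]; exact (e ⟨q, hq⟩).2
  · set Z := e.symm ⟨c * q, hq⟩ with hZ
    have h1 : e Z = ⟨c * q, hq⟩ := by rw [hZ]; exact e.apply_symm_apply _
    have h2 : ((e Z : H') : ℚ) = c * (Z : ℚ) := key _ Z.2
    rw [h1] at h2
    have h3 : q = (Z : ℚ) := mul_left_cancel₀ hc0 (by simpa using h2)
    rw [h3]; exact Z.2

lemma iso_of_scale {c : ℚ} (hc : c ≠ 0) (h : ∀ q : ℚ, q ∈ H ↔ c * q ∈ H') :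
    Nonempty (H ≃+ H') := by
  refine ⟨{ toFun := fun y => ⟨c * y.1, (h y.1).mp y.2⟩
            invFun := fun z => ⟨z.1 / c, (h _).mpr (by rw [mul_div_cancel₀ _ hc]; exact z.2)⟩
            left_inv := fun y => Subtype.ext (by field_simp)
            right_inv := fun z => Subtype.ext (by field_simp)
            map_add' := fun a b => Subtype.ext (by push_cast; ring) }⟩

lemma E0_of_finite {a b : ℕ → Bool} (h : {n : ℕ | a n ≠ b n}.Finite) : E0 a b := by
  obtain ⟨N, hN⟩ := h.bddAbove
  refine ⟨N + 1, fun n hn => ?_⟩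
  by_contra hne
  have h1 : n ∈ {n : ℕ | a n ≠ b n} := hne
  have h2 : n ≤ N := hN h1
  omega

end Subgroup

section Dir2

/-- minimal allowed valuation at `p` for the group coded by `u`. -/
noncomputable def au (u : ℕ → Bool) (p : ℕ) : ℤ := if u (pidx p) = true then -1 else 0

lemma au_nonpos (u : ℕ → Bool) (p : ℕ) : au u p ≤ 0 := by
  unfold au; split <;> omega

lemma au_ge (u : ℕ → Bool) (p : ℕ) : -1 ≤ au u p := by
  unfold au; split <;> omega

noncomputable def gBool (u : ℕ → Bool) : ℚ → Bool := fun q =>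
  decide (Squarefree q.den) && decide (∀ p ∈ q.den.primeFactors, u (pidx p) = true)

lemma gBool_zero (u : ℕ → Bool) : gBool u 0 = true := by
  simp [gBool, squarefree_one]

lemma gBool_one (u : ℕ → Bool) : gBool u 1 = true := by
  simp [gBool, squarefree_one]

lemma gBool_iff (u : ℕ → Bool) {q : ℚ} (hq : q ≠ 0) :
    gBool u q = true ↔ ∀ p : ℕ, p.Prime → au u p ≤ vp p q := by
  unfold gBool
  rw [Bool.and_eq_true, decide_eq_true_eq, decide_eq_true_eq]
  constructor
  · rintro ⟨hsf, hfac⟩ p hp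
    by_cases hdvd : p ∣ q.den
    · have h1 : padicValNat p q.den ≤ 1 := by
        by_contra hc
        have h2 : p ^ 2 ∣ q.den := by
          haveI := Fact.mk hp
          exact (padicValNat_dvd_iff_le q.den_nz).mpr (by omega)
        exact (Nat.squarefree_iff_prime_squarefree.mp hsf p hp) (by
          have := h2; rwa [pow_two] at this)
      have h3 : u (pidx p) = true :=
        hfac p (Nat.mem_primeFactors.mpr ⟨hp, hdvd, q.den_nz⟩)
      rw [vp_dvd_den hp hdvd]
      unfold au
      rw [if_pos h3]
      omega
    · have := vp_not_dvd_den hp hdvd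
      have := au_nonpos u p
      omega
  · intro h
    constructor
    · rw [Nat.squarefree_iff_prime_squarefree]
      intro p hp hdvd
      have hdvd' : p ∣ q.den := dvd_trans (Dvd.intro p rfl) hdvd
      have h1 : 2 ≤ padicValNat p q.den := by
        haveI := Fact.mk hp
        have := (padicValNat_dvd_iff_le q.den_nz (p := p) (n := 2) (a := q.den)).mp
          (by rwa [pow_two])
        omega
      have h2 := vp_dvd_den hp hdvd'
      have h3 := h p hp
      have h4 := au_ge u p
      omega
    · intro p hps
      have hp := Nat.prime_of_mem_primeFactors hps
      have hdvd := Nat.dvd_of_mem_primeFactors hps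
      haveI := Fact.mk hp
      have h1 : 1 ≤ padicValNat p q.den := one_le_padicValNat_of_dvd q.den_nz hdvd
      have h2 := vp_dvd_den hp hdvd
      have h3 := h p hp
      by_contra hc
      have : au u p = 0 := by unfold au; rw [if_neg hc]
      omega

noncomputable def Hgrp (u : ℕ → Bool) : AddSubgroup ℚ where
  carrier := {q | gBool u q = true}
  zero_mem' := gBool_zero u
  add_mem' := by
    intro a b ha hb
    by_cases ha0 : a = 0
    · simpa [ha0] using hb
    by_cases hb0 : b = 0
    · simpa [hb0] using ha
    by_cases hab0 : a + b = 0
    · simp only [Set.mem_setOf_eq, hab0]; exact gBool_zero u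
    simp only [Set.mem_setOf_eq] at ha hb ⊢
    rw [gBool_iff u hab0]
    intro p hp
    haveI := Fact.mk hp
    have hmin := padicValRat.min_le_padicValRat_add (p := p) hab0
    have h1 := (gBool_iff u ha0).mp ha p hp
    have h2 := (gBool_iff u hb0).mp hb p hp
    rcases le_total (padicValRat p a) (padicValRat p b) with hab | hab
    · rw [min_eq_left hab] at hmin; unfold vp at h1 h2 ⊢; omega
    · rw [min_eq_right hab] at hmin; unfold vp at h1 h2 ⊢; omega
  neg_mem' := by
    intro a ha
    simp only [Set.mem_setOf_eq] at ha ⊢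
    unfold gBool at ha ⊢
    rwa [Rat.neg_den]

lemma codes_g (u : ℕ → Bool) : CodesSubgroup (gBool u) (Hgrp u) := fun _ => Iff.rfl

lemma Hgrp_ne_bot (u : ℕ → Bool) : Hgrp u ≠ ⊥ := by
  intro h
  have h1 : (1 : ℚ) ∈ Hgrp u := gBool_one u
  rw [h] at h1
  exact one_ne_zero (AddSubgroup.mem_bot.mp h1)

lemma mem_Hgrp_iff {u : ℕ → Bool} {q : ℚ} (hq : q ≠ 0) :
    q ∈ Hgrp u ↔ ∀ p : ℕ, p.Prime → au u p ≤ vp p q := gBool_iff u hq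

lemma Hgrp_scale {u v : ℕ → Bool} {c : ℚ} (hc : c ≠ 0)
    (hvc : ∀ p : ℕ, p.Prime → vp p c = au v p - au u p) (q : ℚ) :
    q ∈ Hgrp u ↔ c * q ∈ Hgrp v := by
  by_cases hq0 : q = 0
  · simp only [hq0, mul_zero]
    exact ⟨fun _ => zero_mem _, fun _ => zero_mem _⟩
  have hcq0 : c * q ≠ 0 := mul_ne_zero hc hq0
  rw [mem_Hgrp_iff hq0, mem_Hgrp_iff hcq0]
  constructor <;> intro h p hp <;>
    have h1 := h p hp <;> have h2 := hvc p hp <;>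
    have h3 := vp_mul hp hc hq0 <;> omega

lemma vp_rangeProd (w : ℕ → Bool) (N : ℕ) {p : ℕ} (hp : p.Prime) :
    vp p (∏ i ∈ Finset.range N, ((pr i : ℚ)) ^ (if w i then 1 else 0)) =
      if pidx p < N ∧ w (pidx p) = true then 1 else 0 := by
  rw [vp_prod_pow hp (fun i _ => pr_prime i)]
  rcases Nat.lt_or_ge (pidx p) N with hlt | hge
  · rw [Finset.sum_eq_single (pidx p)]
    · by_cases hw : w (pidx p) = true <;> simp [pr_pidx hp, hw, hlt]
    · intro i _ hne
      rw [if_neg]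
      intro he
      exact hne (by rw [he, pidx_pr])
    · intro habs
      exact absurd (Finset.mem_range.mpr hlt) habs
  · rw [if_neg (by omega), Finset.sum_eq_zero]
    intro i hi
    have hiN := Finset.mem_range.mp hi
    rw [if_neg]
    intro he
    have : i = pidx p := by rw [he, pidx_pr]
    omega

lemma dir2_forward {u v : ℕ → Bool} (h : E0 u v) : Nonempty (Hgrp u ≃+ Hgrp v) := by
  obtain ⟨N, hN⟩ := h
  set Cu : ℚ := ∏ i ∈ Finset.range N, ((pr i : ℚ)) ^ (if u i then 1 else 0) with hCu
  set Cv : ℚ := ∏ i ∈ Finset.range N, ((pr i : ℚ)) ^ (if v i then 1 else 0) with hCv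
  have hCu0 : Cu ≠ 0 := Finset.prod_ne_zero_iff.mpr fun i _ =>
    pow_ne_zero _ (Nat.cast_ne_zero.mpr (pr_prime i).ne_zero)
  have hCv0 : Cv ≠ 0 := Finset.prod_ne_zero_iff.mpr fun i _ =>
    pow_ne_zero _ (Nat.cast_ne_zero.mpr (pr_prime i).ne_zero)
  have hc0 : Cu / Cv ≠ 0 := div_ne_zero hCu0 hCv0
  apply iso_of_scale hc0
  apply Hgrp_scale hc0
  intro p hp
  rw [vp_div hp hCu0 hCv0, vp_rangeProd u N hp, vp_rangeProd v N hp]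
  unfold au
  by_cases hlt : pidx p < N
  · by_cases hu : u (pidx p) = true <;> by_cases hv : v (pidx p) = true <;>
      simp [hu, hv, hlt]
  · have heq : u (pidx p) = v (pidx p) := hN _ (by omega)
    rw [if_neg (by tauto), if_neg (by tauto), heq]
    omega

lemma dir2_back {u v : ℕ → Bool} (h : Nonempty (Hgrp u ≃+ Hgrp v)) : E0 u v := by
  obtain ⟨e⟩ := h
  obtain ⟨c, hc0, hc⟩ := exists_scale_of_iso (Hgrp_ne_bot u) e
  apply E0_of_finite
  have hsupp := vp_support_finite hc0
  apply Set.Finite.subset (hsupp.preimage (Set.injOn_of_injective pr_inj))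
  intro n hn
  simp only [Set.mem_preimage, Set.mem_setOf_eq]
  refine ⟨pr_prime n, ?_⟩
  intro hvpc
  apply hn
  set p : ℕ := pr n with hpn
  have hp : p.Prime := pr_prime n
  have hp0 : (p : ℚ) ≠ 0 := Nat.cast_ne_zero.mpr hp.ne_zero
  have hvp_inv : ∀ l : ℕ, l.Prime → vp l (1 / (p:ℚ)) = -(if l = p then 1 else 0) := by
    intro l hl
    rw [vp_div hl one_ne_zero hp0]
    have h1 : vp l ((p:ℚ)^1) = if l = p then (1:ℤ) else 0 := vp_prime_pow hl hp 1
    rw [pow_one] at h1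
    rw [h1]
    simp [vp, padicValRat.one]
  have hmemu : ∀ w : ℕ → Bool, w n = true → (1 / (p:ℚ)) ∈ Hgrp w := by
    intro w hw
    rw [mem_Hgrp_iff (one_div_ne_zero hp0)]
    intro l hl
    rw [hvp_inv l hl]
    by_cases hlp : l = p
    · subst hlp
      rw [if_pos rfl]
      unfold au
      rw [hpn, pidx_pr, if_pos hw]
    · rw [if_neg hlp]
      have := au_nonpos w l
      omega
  have himp1 : u n = true → v n = true := by
    intro hu
    have hq0 : c * (1/(p:ℚ)) ≠ 0 := mul_ne_zero hc0 (one_div_ne_zero hp0)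
    have h1 : c * (1/(p:ℚ)) ∈ Hgrp v := (hc _).mp (hmemu u hu)
    have h2 := (mem_Hgrp_iff hq0).mp h1 p hp
    have h3 : vp p (c * (1/(p:ℚ))) = -1 := by
      rw [vp_mul hp hc0 (one_div_ne_zero hp0), hvp_inv p hp, hvpc]
      simp
    rw [h3] at h2
    by_contra hv
    unfold au at h2
    rw [hpn, pidx_pr, if_neg hv] at h2
    omega
  have himp2 : v n = true → u n = true := by
    intro hv
    have hpc0 : (p:ℚ) * c ≠ 0 := mul_ne_zero hp0 hc0
    have hq0 : (1/((p:ℚ) * c)) ≠ 0 := one_div_ne_zero hpc0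
    have hce : c * (1/((p:ℚ)*c)) = 1/(p:ℚ) := by field_simp
    have h2 : (1/((p:ℚ)*c)) ∈ Hgrp u := (hc _).mpr (by rw [hce]; exact hmemu v hv)
    have h3 := (mem_Hgrp_iff hq0).mp h2 p hp
    have h4 : vp p (1/((p:ℚ)*c)) = -1 := by
      rw [vp_div hp one_ne_zero hpc0, vp_mul hp hp0 hc0, hvpc]
      have h5 : vp p ((p:ℚ)^1) = if p = p then (1:ℤ) else 0 := vp_prime_pow hp hp 1
      rw [pow_one, if_pos rfl] at h5
      rw [h5]
      simp [vp, padicValRat.one]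
    rw [h4] at h3
    by_contra hu
    unfold au at h3
    rw [hpn, pidx_pr, if_neg hu] at h3
    omega
  by_cases hu : u n = true
  · rw [hu, himp1 hu]
  · by_cases hv : v n = true
    · exact absurd (himp2 hv) hu
    · rw [Bool.not_eq_true] at hu hv
      rw [hu, hv]

end Dir2

section Dir1

lemma codes_unique {χ : ℚ → Bool} {H H' : AddSubgroup ℚ}
    (h : CodesSubgroup χ H) (h' : CodesSubgroup χ H') : H = H' := by
  ext q
  rw [← h q, h' q]

noncomputable def eQ : ℕ → ℚ := fun n => (Denumerable.eqv ℚ).symm n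

lemma eQ_surj : Function.Surjective eQ := (Denumerable.eqv ℚ).symm.surjective

noncomputable def Hof (χ : G1) : AddSubgroup ℚ := χ.2.choose

lemma Hof_codes (χ : G1) : CodesSubgroup χ.1 (Hof χ) := χ.2.choose_spec.1

lemma Hof_ne_bot (χ : G1) : Hof χ ≠ ⊥ := χ.2.choose_spec.2

lemma exists_bp (χ : G1) : ∃ i : ℕ, χ.1 (eQ i) = true ∧ eQ i ≠ 0 := by
  obtain ⟨x, hx0⟩ := AddSubgroup.ne_bot_iff_exists_ne_zero.mp (Hof_ne_bot χ)
  obtain ⟨i, hi⟩ := eQ_surj (x : ℚ)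
  refine ⟨i, ?_, ?_⟩
  · rw [hi]
    exact (Hof_codes χ _).mpr x.2
  · rw [hi]
    exact fun h => hx0 (Subtype.ext h)

open Classical in
noncomputable def bp (χ : G1) : ℚ := eQ (Nat.find (exists_bp χ))

lemma bp_spec (χ : G1) : χ.1 (bp χ) = true ∧ bp χ ≠ 0 := by
  classical
  exact Nat.find_spec (exists_bp χ)

lemma bp_mem (χ : G1) : bp χ ∈ Hof χ := (Hof_codes χ _).mp (bp_spec χ).1

lemma bp_ne_zero (χ : G1) : bp χ ≠ 0 := (bp_spec χ).2

noncomputable def fmap (χ : G1) : ℕ → Bool := fun n =>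
  χ.1 (bp χ / ((pr (Nat.unpair n).1 : ℚ)) ^ ((Nat.unpair n).2 + 1))

lemma fmap_iff (χ : G1) (n : ℕ) :
    fmap χ n = true ↔ Col (Hof χ) (bp χ) (pr (Nat.unpair n).1) ((Nat.unpair n).2 + 1) :=
  Hof_codes χ _

/-- Forward: an isomorphism of the coded groups forces the bit sequences to be
`E₀`-equivalent. -/
lemma dir1_forward (χ χ' : G1) (h : Iso1 χ.1 χ'.1) : E0 (fmap χ) (fmap χ') := by
  obtain ⟨H, H', hcode, hcode', ⟨e⟩⟩ := h
  have hH : H = Hof χ := codes_unique hcode (Hof_codes χ)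
  have hH' : H' = Hof χ' := codes_unique hcode' (Hof_codes χ')
  subst hH hH'
  obtain ⟨c, hc0, hc⟩ := exists_scale_of_iso (Hof_ne_bot χ) e
  set x : ℚ := bp χ with hxd
  set x' : ℚ := bp χ' with hxd'
  have hx0 : x ≠ 0 := bp_ne_zero χ
  have hx0' : x' ≠ 0 := bp_ne_zero χ'
  set y : ℚ := x' / c with hy
  have hy0 : y ≠ 0 := div_ne_zero hx0' hc0
  have hyH : y ∈ Hof χ := by
    rw [hc]
    rw [show c * (x' / c) = x' by field_simp]
    exact bp_mem χ'
  have hcoly : ∀ p : ℕ, p.Prime → ∀ k : ℕ,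
      (Col (Hof χ') x' p k ↔ Col (Hof χ) y p k) := by
    intro p hp k
    have hpow : x' / (p:ℚ)^k = c * (y / (p:ℚ)^k) := by
      rw [hy]; field_simp
    unfold Col
    rw [hpow, ← hc]
  apply E0_of_finite
  have hDfin : ∀ i : ℕ,
      {k : ℕ | ¬ (Col (Hof χ) x (pr i) k ↔ Col (Hof χ) y (pr i) k)}.Finite :=
    fun i => col_diff_finite (bp_mem χ) hyH hx0 hy0 (pr_prime i)
  have hbad : {i : ℕ | vp (pr i) y ≠ vp (pr i) x}.Finite := by
    have h1 := vp_support_finite (div_ne_zero hy0 hx0)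
    apply Set.Finite.subset (h1.preimage (Set.injOn_of_injective pr_inj))
    intro i hi
    simp only [Set.mem_preimage, Set.mem_setOf_eq]
    refine ⟨pr_prime i, ?_⟩
    rw [vp_div (pr_prime i) hy0 hx0]
    simp only [Set.mem_setOf_eq] at hi
    omega
  apply Set.Finite.subset (Set.Finite.biUnion hbad (fun i _ =>
    (((hDfin i).preimage (Set.injOn_of_injective Nat.succ_injective)).image (Nat.pair i))))
  intro n hn
  simp only [Set.mem_setOf_eq] at hn
  set i : ℕ := (Nat.unpair n).1 with hi
  set k : ℕ := (Nat.unpair n).2 with hk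
  have hdiff : ¬ (Col (Hof χ) x (pr i) (k+1) ↔ Col (Hof χ) y (pr i) (k+1)) := by
    intro hiff
    apply hn
    have h1 := fmap_iff χ n
    have h2 := fmap_iff χ' n
    rw [← hi, ← hk] at h1 h2
    have h3 : (fmap χ n = true) ↔ (fmap χ' n = true) := by
      rw [h1, h2, hcoly (pr i) (pr_prime i) (k+1)]
      exact hiff
    exact Bool.eq_iff_iff.mpr h3
  have hibad : i ∈ {i : ℕ | vp (pr i) y ≠ vp (pr i) x} := by
    simp only [Set.mem_setOf_eq]
    intro hvpeq
    exact hdiff (col_eq_of_vp_eq (bp_mem χ) hyH hx0 hy0 (pr_prime i) hvpeq (k+1))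
  apply Set.mem_biUnion hibad
  refine ⟨k, ?_, ?_⟩
  · simp only [Set.mem_preimage, Set.mem_setOf_eq]
    exact hdiff
  · rw [hi, hk]
    exact Nat.pair_unpair n

lemma col_zero {H : AddSubgroup ℚ} {z : ℚ} (hz : z ∈ H) (p : ℕ) : Col H z p 0 := by
  simpa [Col] using hz

lemma vp_prProd (g : ℕ → ℕ) (N i : ℕ) :
    vp (pr i) (∏ j ∈ Finset.range N, ((pr j : ℚ)) ^ (g j)) = if i < N then (g i : ℤ) else 0 := by
  rw [vp_prod_pow (pr_prime i) (fun j _ => pr_prime j)]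
  rcases Nat.lt_or_ge i N with hlt | hge
  · rw [Finset.sum_eq_single i]
    · rw [if_pos rfl, if_pos hlt]
    · intro j _ hne
      rw [if_neg (fun he => hne (pr_inj he.symm))]
    · intro habs
      exact absurd (Finset.mem_range.mpr hlt) habs
  · rw [if_neg (by omega), Finset.sum_eq_zero]
    intro j hj
    have hjN := Finset.mem_range.mp hj
    rw [if_neg (fun he => by have : j = i := pr_inj he.symm; omega)]

lemma prodPrime_ne_zero (g : ℕ → ℕ) (N : ℕ) :
    (∏ j ∈ Finset.range N, ((pr j : ℚ)) ^ (g j)) ≠ 0 :=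
  Finset.prod_ne_zero_iff.mpr fun j _ =>
    pow_ne_zero _ (Nat.cast_ne_zero.mpr (pr_prime j).ne_zero)

/-- The key construction: if the bit arrays of basepoints agree above `N`, the groups
are isomorphic. -/
lemma cols_iso {H H' : AddSubgroup ℚ} {x x' : ℚ} (hx : x ∈ H) (hx' : x' ∈ H')
    (hx0 : x ≠ 0) (hx0' : x' ≠ 0) (N : ℕ)
    (hbits : ∀ i k : ℕ, N ≤ Nat.pair i k →
      (Col H x (pr i) (k+1) ↔ Col H' x' (pr i) (k+1))) :
    Nonempty (H ≃+ H') := by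
  classical
  have hbig : ∀ i k, N + 1 ≤ k → (Col H x (pr i) k ↔ Col H' x' (pr i) k) := by
    intro i k hk
    have h1 := hbits i (k-1) (le_trans (by omega) (Nat.right_le_pair i (k-1)))
    rwa [show k - 1 + 1 = k by omega] at h1
  have hhigh : ∀ i k, N ≤ i → 1 ≤ k → (Col H x (pr i) k ↔ Col H' x' (pr i) k) := by
    intro i k hNi hk
    have h1 := hbits i (k-1) (le_trans hNi (Nat.left_le_pair i (k-1)))
    rwa [show k - 1 + 1 = k by omega] at h1
  have hexiff : ∀ i, (∃ k, ¬ Col H x (pr i) k) ↔ (∃ k, ¬ Col H' x' (pr i) k) := by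
    intro i
    constructor
    · rintro ⟨k, hk⟩
      refine ⟨max k (N+1), ?_⟩
      rw [← hbig i _ (le_max_right _ _)]
      exact fun hcol => hk (Col.anti (pr_prime i) (le_max_left _ _) hcol)
    · rintro ⟨k, hk⟩
      refine ⟨max k (N+1), ?_⟩
      rw [hbig i _ (le_max_right _ _)]
      exact fun hcol => hk (Col.anti (pr_prime i) (le_max_left _ _) hcol)
  set A : ℕ → ℕ := fun i => if h : ∃ k, ¬ Col H x (pr i) k then Nat.find h else 0 with hA
  set B : ℕ → ℕ := fun i => if h : ∃ k, ¬ Col H' x' (pr i) k then Nat.find h else 0 with hB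
  have hcolxA : ∀ i, (∃ k, ¬ Col H x (pr i) k) → ∀ k, (Col H x (pr i) k ↔ k < A i) := by
    intro i hex k
    rw [hA]
    simp only [dif_pos hex]
    constructor
    · intro hcol
      by_contra hge
      exact (Nat.find_spec hex) (Col.anti (pr_prime i) (by omega) hcol)
    · intro hlt
      have := Nat.find_min hex hlt
      tauto
  have hcolx'B : ∀ i, (∃ k, ¬ Col H' x' (pr i) k) → ∀ k, (Col H' x' (pr i) k ↔ k < B i) := by
    intro i hex k
    rw [hB]
    simp only [dif_pos hex]
    constructor
    · intro hcol
      by_contra hge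
      exact (Nat.find_spec hex) (Col.anti (pr_prime i) (by omega) hcol)
    · intro hlt
      have := Nat.find_min hex hlt
      tauto
  have hA1 : ∀ i, (∃ k, ¬ Col H x (pr i) k) → 1 ≤ A i := by
    intro i hex
    by_contra hc
    have h0 : A i = 0 := by omega
    have := (hcolxA i hex 0).mp (col_zero hx (pr i))
    omega
  have hB1 : ∀ i, (∃ k, ¬ Col H' x' (pr i) k) → 1 ≤ B i := by
    intro i hex
    by_contra hc
    have h0 : B i = 0 := by omega
    have := (hcolx'B i hex 0).mp (col_zero hx' (pr i))
    omega
  set Dq : ℚ := ∏ j ∈ Finset.range N, ((pr j : ℚ)) ^ (B j - A j) with hDq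
  set Mq : ℚ := ∏ j ∈ Finset.range N, ((pr j : ℚ)) ^ (A j - B j) with hMq
  have hDq0 : Dq ≠ 0 := prodPrime_ne_zero _ N
  have hMq0 : Mq ≠ 0 := prodPrime_ne_zero _ N
  set y' : ℚ := Mq * (x' / Dq) with hy'
  have hy'0 : y' ≠ 0 := mul_ne_zero hMq0 (div_ne_zero hx0' hDq0)
  have hxD : x' / Dq ∈ H' := by
    rw [hDq]
    apply div_prod_mem hx' (fun j _ => pr_prime j)
      ((Set.injOn_of_injective pr_inj))
    intro j _
    by_cases hex' : ∃ k, ¬ Col H' x' (pr j) k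
    · rw [show (x' / (pr j : ℚ) ^ (B j - A j) ∈ H') = Col H' x' (pr j) (B j - A j) from rfl]
      rw [hcolx'B j hex']
      have h1 := hB1 j hex'
      have h2 := hA1 j ((hexiff j).mpr hex')
      omega
    · push_neg at hex'
      exact hex' _
  have hy'H : y' ∈ H' := by
    have hcast : Mq = (((∏ j ∈ Finset.range N, (pr j) ^ (A j - B j) : ℕ) : ℤ) : ℚ) := by
      rw [hMq]; push_cast; rfl
    rw [hy', hcast]
    exact zsmul_mem' _ hxD
  have hvp : ∀ i : ℕ, vp (pr i) y' - vp (pr i) x' =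
      (if i < N then (A i : ℤ) - (B i : ℤ) else 0) := by
    intro i
    have hp := pr_prime i
    have h1 : vp (pr i) y' = vp (pr i) Mq + (vp (pr i) x' - vp (pr i) Dq) := by
      rw [hy', vp_mul hp hMq0 (div_ne_zero hx0' hDq0), vp_div hp hx0' hDq0]
    rw [h1, hMq, hDq, vp_prProd, vp_prProd]
    rcases Nat.lt_or_ge i N with hlt | hge
    · rw [if_pos hlt, if_pos hlt, if_pos hlt]
      omega
    · rw [if_neg (by omega), if_neg (by omega), if_neg (by omega)]
      omega
  have hcols : ∀ p : ℕ, p.Prime → ∀ k : ℕ, (Col H x p k ↔ Col H' y' p k) := by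
    intro p hp k
    have hpi : pr (pidx p) = p := pr_pidx hp
    set i : ℕ := pidx p with hip
    rcases Nat.eq_zero_or_pos k with rfl | hk1
    · exact iff_of_true (col_zero hx p) (col_zero hy'H p)
    have hvpi : vp p y' - vp p x' = (if i < N then (A i : ℤ) - (B i : ℤ) else 0) := by
      rw [← hpi]; exact hvp i
    by_cases hiN : i < N
    · rw [if_pos hiN] at hvpi
      by_cases hex : ∃ m, ¬ Col H x (pr i) m
      · have hex' : ∃ m, ¬ Col H' x' (pr i) m := (hexiff i).mp hex
        have ha := hcolxA i hex
        have hb := hcolx'B i hex'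
        have ha1 := hA1 i hex
        have hb1 := hB1 i hex'
        rw [hpi] at ha hb
        have hy'col : ∀ m : ℕ, (Col H' y' p m ↔ m < A i) := by
          intro m
          constructor
          · intro hcy
            by_contra hge
            have h2 : Col H' x' p (B i) := col_transfer hy'H hx' hy'0 hx0' hp
              (k := m) (j := B i) (by omega) hcy
            rw [hb] at h2
            omega
          · intro hlt
            have h2 : Col H' x' p (B i - 1) := (hb _).mpr (by omega)
            exact col_transfer hx' hy'H hx0' hy'0 hp
              (k := B i - 1) (j := m) (by omega) h2
        rw [ha k, hy'col k]
      · have hexn' : ¬ ∃ m, ¬ Col H' x' (pr i) m := fun h => hex ((hexiff i).mpr h)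
        push_neg at hex hexn'
        have hAB0 : A i = 0 ∧ B i = 0 := by
          constructor
          · rw [hA]; simp only [dif_neg (not_exists.mpr (fun m => not_not.mpr (hex m)))]
          · rw [hB]; simp only [dif_neg (not_exists.mpr (fun m => not_not.mpr (hexn' m)))]
        have hvp0 : vp p y' = vp p x' := by omega
        have h1 : Col H' x' p k ↔ Col H' y' p k :=
          col_eq_of_vp_eq hx' hy'H hx0' hy'0 hp hvp0 k
        rw [← h1]
        rw [hpi] at hex hexn'
        exact iff_of_true (hex k) (hexn' k)
    · rw [if_neg hiN] at hvpi
      have hvp0 : vp p y' = vp p x' := by omega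
      have h1 : Col H' x' p k ↔ Col H' y' p k :=
        col_eq_of_vp_eq hx' hy'H hx0' hy'0 hp hvp0 k
      have h2 := hhigh i k (by omega) hk1
      rw [hpi] at h2
      rw [h2]
      exact h1
  exact iso_of_scale (div_ne_zero hy'0 hx0)
    (scale_iff_of_cols_eq hx hy'H hx0 hy'0 hcols)

lemma dir1_backward (χ χ' : G1) (h : E0 (fmap χ) (fmap χ')) : Iso1 χ.1 χ'.1 := by
  obtain ⟨N, hN⟩ := h
  refine ⟨Hof χ, Hof χ', Hof_codes χ, Hof_codes χ', ?_⟩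
  apply cols_iso (bp_mem χ) (bp_mem χ') (bp_ne_zero χ) (bp_ne_zero χ') N
  intro i k hNik
  have h1 := hN (Nat.pair i k) hNik
  have h2 := fmap_iff χ (Nat.pair i k)
  have h3 := fmap_iff χ' (Nat.pair i k)
  rw [Nat.unpair_pair] at h2 h3
  rw [← h2, ← h3, h1]

end Dir1

section Meas

lemma measurable_bool {α : Type*} [MeasurableSpace α] {f : α → Bool}
    (h : MeasurableSet {a | f a = true}) : Measurable f := by
  apply measurable_to_countable'
  intro b
  cases b
  · have : f ⁻¹' {false} = {a | f a = true}ᶜ := by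
      ext a; simp
    rw [this]
    exact h.compl
  · have : f ⁻¹' {true} = {a | f a = true} := by
      ext a; simp
    rw [this]
    exact h

lemma measurable_eval_G1 (q : ℚ) : Measurable (fun χ : G1 => χ.1 q) :=
  (measurable_pi_apply q).comp measurable_subtype_coe

lemma fmap_measurable : Measurable fmap := by
  rw [measurable_pi_iff]
  intro n
  have hfind : Measurable (fun χ : G1 => Nat.find (exists_bp χ)) := by
    apply measurable_find
    intro k
    by_cases h0 : eQ k ≠ 0
    · have : {χ : G1 | χ.1 (eQ k) = true ∧ eQ k ≠ 0}
          = (fun χ : G1 => χ.1 (eQ k)) ⁻¹' {true} := by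
        ext χ; simp [h0]
      rw [this]
      exact measurable_eval_G1 (eQ k) (measurableSet_singleton true)
    · have : {χ : G1 | χ.1 (eQ k) = true ∧ eQ k ≠ 0} = ∅ := by
        ext χ; simp [h0]
      rw [this]
      exact MeasurableSet.empty
  have hF : Measurable (fun z : (ℚ → Bool) × ℕ =>
      z.1 (eQ z.2 / ((pr (Nat.unpair n).1 : ℚ)) ^ ((Nat.unpair n).2 + 1))) := by
    apply measurable_from_prod_countable_left
    intro i
    have hm : Measurable (fun y : ℚ → Bool =>
        y (eQ i / ((pr (Nat.unpair n).1 : ℚ)) ^ ((Nat.unpair n).2 + 1))) :=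
      measurable_pi_apply _
    exact hm
  exact hF.comp (measurable_subtype_coe.prodMk hfind)

lemma g_measurable : Measurable (fun u : ℕ → Bool => gBool u) := by
  rw [measurable_pi_iff]
  intro q
  apply measurable_bool
  by_cases hsf : Squarefree q.den
  · have : {u : ℕ → Bool | gBool u q = true}
        = ⋂ p ∈ (q.den.primeFactors : Set ℕ), {u : ℕ → Bool | u (pidx p) = true} := by
      ext u
      simp [gBool, hsf]
    rw [this]
    apply MeasurableSet.biInter ((q.den.primeFactors : Set ℕ).to_countable)
    intro p _
    have hm : Measurable (fun u : ℕ → Bool => u (pidx p)) := measurable_pi_apply _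
    exact hm (measurableSet_singleton true)
  · have : {u : ℕ → Bool | gBool u q = true} = ∅ := by
      ext u; simp [gBool, hsf]
    rw [this]
    exact MeasurableSet.empty

end Meas

end BaerAux

/-- Baer's classification in complexity terms: isomorphism of nonzero subgroups of `ℚ`
is Borel bireducible with `E₀`. -/
theorem baer_rank_one_bireducible_E0 :
    (∃ f : G1 → (ℕ → Bool), Measurable f ∧
      ∀ χ χ' : G1, Iso1 χ χ' ↔ E0 (f χ) (f χ')) ∧
    (∃ g : (ℕ → Bool) → G1, Measurable g ∧
      ∀ u v : ℕ → Bool, E0 u v ↔ Iso1 (g u) (g v)) := by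
  open BaerAux in
  constructor
  · refine ⟨fmap, fmap_measurable, fun χ χ' => ⟨dir1_forward χ χ', dir1_backward χ χ'⟩⟩
  · refine ⟨fun u => ⟨gBool u, Hgrp u, codes_g u, Hgrp_ne_bot u⟩,
      Measurable.subtype_mk g_measurable, fun u v => ?_⟩
    constructor
    · intro h
      exact ⟨Hgrp u, Hgrp v, codes_g u, codes_g v, dir2_forward h⟩
    · rintro ⟨H, H', hcu, hcv, hiso⟩
      have h1 : H = Hgrp u := codes_unique hcu (codes_g u)
      have h2 : H' = Hgrp v := codes_unique hcv (codes_g v)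
      subst h1 h2
      exact dir2_back hiso
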